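/- arXiv:2111.07004 — 2 statements merged into one kernel-verified Lean document; each statement's English description precedes it below -/
import Mathlib

section
/- Let A, H, E, F be real matrices of compatible dimensions with F Fᵀ ≤ I (Loewner order), let X be symmetric positive definite, and let γ > 0 satisfy γ⁻¹ I − E X Eᵀ positive definite. Then (A + H F E) X (A + H F E)ᵀ ≤ A (X⁻¹ − γ Eᵀ E)⁻¹ Aᵀ + γ⁻¹ H Hᵀ in the Loewner order. -/
open Matrix

lemma psd_smul_aux {k : ℕ} {M : Matrix (Fin k) (Fin k) ℝ} (hM : M.PosSemidef)
    {c : ℝ} (hc : 0 ≤ c) : (c • M).PosSemidef := by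
  refine ⟨?_, fun x => ?_⟩
  · unfold Matrix.IsHermitian
    rw [conjTranspose_smul, hM.1.eq]
    simp
  · have := hM.2 x
    have e : (x.sum fun i xi => x.sum fun j xj => star xi * (c • M) i j * xj)
        = c * x.sum fun i xi => x.sum fun j xj => star xi * M i j * xj := by
      simp only [Finsupp.sum, Finset.mul_sum, Matrix.smul_apply, smul_eq_mul]
      refine Finset.sum_congr rfl fun i _ => Finset.sum_congr rfl fun j _ => ?_
      ring
    rw [e]
    exact mul_nonneg hc this

/-- Lemma 2 (Xie et al. 1994): if `F Fᵀ ≤ I`, `X` is symmetric positive definite and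
`γ > 0` satisfies `γ⁻¹ I - E X Eᵀ > 0`, then
`(A + H F E) X (A + H F E)ᵀ ≤ A (X⁻¹ - γ Eᵀ E)⁻¹ Aᵀ + γ⁻¹ H Hᵀ` in the Loewner order. -/
theorem xie_robust_bound (m n p q : ℕ)
    (A : Matrix (Fin m) (Fin n) ℝ) (H : Matrix (Fin m) (Fin p) ℝ)
    (F : Matrix (Fin p) (Fin q) ℝ) (E : Matrix (Fin q) (Fin n) ℝ)
    (X : Matrix (Fin n) (Fin n) ℝ) (γ : ℝ)
    (hF : ((1 : Matrix (Fin p) (Fin p) ℝ) - F * Fᵀ).PosSemidef)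
    (hX : X.PosDef) (hγ : 0 < γ)
    (hγE : (γ⁻¹ • (1 : Matrix (Fin q) (Fin q) ℝ) - E * X * Eᵀ).PosDef) :
    (A * (X⁻¹ - γ • (Eᵀ * E))⁻¹ * Aᵀ + γ⁻¹ • (H * Hᵀ)
      - (A + H * F * E) * X * (A + H * F * E)ᵀ).PosSemidef := by
  set R : Matrix (Fin q) (Fin q) ℝ := γ⁻¹ • (1 : Matrix (Fin q) (Fin q) ℝ) - E * X * Eᵀ with hRdef
  set S : Matrix (Fin q) (Fin q) ℝ := R⁻¹ with hSdef
  have hRunit : IsUnit R.det := hγE.det_pos.ne'.isUnit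
  have hSR : S * R = 1 := Matrix.nonsing_inv_mul R hRunit
  have hRS : R * S = 1 := Matrix.mul_nonsing_inv R hRunit
  have hXt : Xᵀ = X := by
    have := hX.isHermitian.eq
    simpa [Matrix.conjTranspose_eq_transpose_of_trivial] using this
  have hRt : Rᵀ = R := by
    have := hγE.isHermitian.eq
    simpa [Matrix.conjTranspose_eq_transpose_of_trivial] using this
  have hSt : Sᵀ = S := by
    rw [hSdef, Matrix.transpose_nonsing_inv, hRt]
  have hXunit : IsUnit X.det := (Matrix.isUnit_iff_isUnit_det X).mp hX.isUnit
  have hXinvX : X⁻¹ * X = 1 := Matrix.nonsing_inv_mul X hXunit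
  -- cancellation helpers
  have hRSm : ∀ (k : ℕ) (M : Matrix (Fin q) (Fin k) ℝ), R * (S * M) = M := by
    intro k M; rw [← Matrix.mul_assoc, hRS, Matrix.one_mul]
  have hSRm : ∀ (k : ℕ) (M : Matrix (Fin q) (Fin k) ℝ), S * (R * M) = M := by
    intro k M; rw [← Matrix.mul_assoc, hSR, Matrix.one_mul]
  have hXim : ∀ (k : ℕ) (M : Matrix (Fin n) (Fin k) ℝ), X⁻¹ * (X * M) = M := by
    intro k M; rw [← Matrix.mul_assoc, hXinvX, Matrix.one_mul]
  have hRm : ∀ (k : ℕ) (M : Matrix (Fin q) (Fin k) ℝ),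
      R * M = γ⁻¹ • M - E * (X * (Eᵀ * M)) := by
    intro k M
    rw [hRdef]
    simp [Matrix.sub_mul, Matrix.smul_mul, Matrix.mul_assoc]
  -- Woodbury identity
  have hΦ : (X⁻¹ - γ • (Eᵀ * E))⁻¹ = X + X * Eᵀ * S * E * X := by
    apply Matrix.inv_eq_right_inv
    have expand : (X⁻¹ - γ • (Eᵀ * E)) * (X + X * Eᵀ * S * E * X)
        = X⁻¹ * X + X⁻¹ * (X * (Eᵀ * (S * (E * X))))
          - γ • (Eᵀ * (E * X)) - γ • (Eᵀ * (E * (X * (Eᵀ * (S * (E * X)))))) := by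
      simp only [Matrix.sub_mul, Matrix.mul_add, Matrix.smul_mul, Matrix.mul_assoc, smul_sub]
      abel
    have hEm : ∀ (k : ℕ) (M : Matrix (Fin q) (Fin k) ℝ),
        E * (X * (Eᵀ * M)) = γ⁻¹ • M - R * M := by
      intro k M; rw [hRm]; abel
    rw [expand, hXinvX, hXim, hEm _ (S * (E * X)), hRSm]
    simp only [Matrix.mul_sub, Matrix.mul_smul, smul_sub, smul_smul,
      mul_inv_cancel₀ hγ.ne', one_smul]
    abel
  rw [hΦ]
  -- key algebraic identity
  have key : A * (X + X * Eᵀ * S * E * X) * Aᵀ + γ⁻¹ • (H * Hᵀ)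
      - (A + H * F * E) * X * (A + H * F * E)ᵀ
      = (A * X * Eᵀ * S - H * F) * R * (A * X * Eᵀ * S - H * F)ᵀ
        + γ⁻¹ • (H * ((1 : Matrix (Fin p) (Fin p) ℝ) - F * Fᵀ) * Hᵀ) := by
    have hG : (A * X * Eᵀ * S - H * F)ᵀ = S * (E * (X * Aᵀ)) - Fᵀ * Hᵀ := by
      simp [Matrix.transpose_sub, Matrix.transpose_mul, hSt, hXt, Matrix.mul_assoc]
    rw [hG]
    simp only [Matrix.transpose_add, Matrix.transpose_mul, Matrix.sub_mul, Matrix.mul_sub,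
      Matrix.mul_add, Matrix.add_mul, Matrix.mul_assoc, hSRm, hRSm, smul_sub]
    rw [hRm _ (Fᵀ * Hᵀ)]
    simp only [Matrix.mul_sub, Matrix.mul_smul, smul_sub, Matrix.one_mul]
    abel
  rw [key]
  have h1 : ((A * X * Eᵀ * S - H * F) * R * (A * X * Eᵀ * S - H * F)ᵀ).PosSemidef := by
    have := hγE.posSemidef.mul_mul_conjTranspose_same (A * X * Eᵀ * S - H * F)
    rwa [Matrix.conjTranspose_eq_transpose_of_trivial] at this
  have h2 : (γ⁻¹ • (H * ((1 : Matrix (Fin p) (Fin p) ℝ) - F * Fᵀ) * Hᵀ)).PosSemidef := by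
    apply psd_smul_aux _ (by positivity)
    have := hF.mul_mul_conjTranspose_same H
    rwa [Matrix.conjTranspose_eq_transpose_of_trivial] at this
  exact h1.add h2
end

section
/- A 3rd-degree exactness property of the symmetric 2n-point rule: for any polynomial φ : ℝⁿ → ℝ of total degree at most 3, the equal-weight symmetric rule with nodes ±√n·eᵢ (eᵢ standard basis vectors) and weights 1/(2n) exactly integrates φ against the standard Gaussian: ∫_{ℝⁿ} φ(x) N(x; 0, I) dx = (1/(2n)) ∑_{i=1}^{n} [φ(√n eᵢ) + φ(−√n eᵢ)]. -/
open MeasureTheory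

open Real

namespace CubAux

lemma abs_pow_le_exp (k : ℕ) (x : ℝ) :
    |x| ^ k ≤ ((4 * (k : ℝ) + 4) ^ k + 1) * Real.exp (x ^ 2 / 4) := by
  have hc : (0:ℝ) < 4 * (k:ℝ) + 4 := by positivity
  set u : ℝ := x ^ 2 / (4 * (k:ℝ) + 4) with hu
  have hu0 : 0 ≤ u := by positivity
  have h1 : u ≤ Real.exp u := (le_add_of_nonneg_right zero_le_one).trans (Real.add_one_le_exp u)
  have h2 : u ^ k ≤ Real.exp u ^ k := pow_le_pow_left₀ hu0 h1 k
  have h3 : Real.exp u ^ k = Real.exp (u * k) := by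
    rw [← Real.exp_nat_mul]; ring_nf
  have h4 : u * k ≤ x ^ 2 / 4 := by
    rw [hu, div_mul_eq_mul_div, div_le_div_iff₀ hc (by norm_num)]
    nlinarith [sq_nonneg x, Nat.cast_nonneg (α := ℝ) k]
  have h6 : (x ^ 2) ^ k ≤ (4 * (k:ℝ) + 4) ^ k * Real.exp (x ^ 2 / 4) := by
    have h2' := h2
    rw [div_pow, h3, div_le_iff₀ (by positivity)] at h2'
    calc (x ^ 2) ^ k ≤ Real.exp (u * k) * (4 * (k:ℝ) + 4) ^ k := h2'
      _ ≤ Real.exp (x ^ 2 / 4) * (4 * (k:ℝ) + 4) ^ k :=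
          mul_le_mul_of_nonneg_right (Real.exp_le_exp.2 h4) (by positivity)
      _ = (4 * (k:ℝ) + 4) ^ k * Real.exp (x ^ 2 / 4) := mul_comm _ _
  have h7 : |x| ^ k ≤ (x ^ 2) ^ k + 1 := by
    rcases le_total (|x|) 1 with h | h
    · have h9 : |x| ^ k ≤ 1 := pow_le_one₀ (abs_nonneg x) h
      have : (0:ℝ) ≤ (x ^ 2) ^ k := by positivity
      linarith
    · have h9 : |x| ^ k ≤ |x| ^ (2 * k) := pow_le_pow_right₀ h (by omega)
      have h10 : |x| ^ (2 * k) = (x ^ 2) ^ k := by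
        rw [pow_mul, sq_abs]
      nlinarith [h9]
  have h8 : (1:ℝ) ≤ Real.exp (x ^ 2 / 4) := Real.one_le_exp (by positivity)
  nlinarith [h6, h7, h8]

lemma integrable_pow_mul_gauss (k : ℕ) :
    Integrable (fun x : ℝ => x ^ k * Real.exp (-x ^ 2 / 2)) := by
  refine Integrable.mono'
    (((integrable_exp_neg_mul_sq (by norm_num : (0:ℝ) < 4⁻¹)).const_mul
      ((4 * (k : ℝ) + 4) ^ k + 1))) ?_ (Filter.Eventually.of_forall fun x => ?_)
  · exact Continuous.aestronglyMeasurable (by continuity)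
  · have h1 : ‖x ^ k * Real.exp (-x ^ 2 / 2)‖ = |x| ^ k * Real.exp (-x ^ 2 / 2) := by
      rw [norm_mul, norm_pow, Real.norm_eq_abs, Real.norm_eq_abs,
        Real.abs_exp]
    rw [h1]
    have h2 := mul_le_mul_of_nonneg_right (abs_pow_le_exp k x) (Real.exp_pos (-x ^ 2 / 2)).le
    calc |x| ^ k * Real.exp (-x ^ 2 / 2)
        ≤ ((4 * (k:ℝ) + 4) ^ k + 1) * Real.exp (x ^ 2 / 4) * Real.exp (-x ^ 2 / 2) := h2
      _ = ((4 * (k:ℝ) + 4) ^ k + 1) * Real.exp (-4⁻¹ * x ^ 2) := by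
          rw [mul_assoc, ← Real.exp_add]; ring_nf

lemma integral_gauss0 : ∫ x : ℝ, Real.exp (-x ^ 2 / 2) = Real.sqrt (2 * Real.pi) := by
  have h := integral_gaussian (1/2 : ℝ)
  simp_rw [show ∀ x : ℝ, -(1/2 : ℝ) * x ^ 2 = -x ^ 2 / 2 from fun x => by ring] at h
  rw [h, show Real.pi / (1/2) = 2 * Real.pi by ring]

lemma integral_gauss_odd (k : ℕ) (hk : Odd k) :
    ∫ x : ℝ, x ^ k * Real.exp (-x ^ 2 / 2) = 0 := by
  have h := integral_neg_eq_self (fun x : ℝ => x ^ k * Real.exp (-x ^ 2 / 2)) volume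
  simp only [neg_sq, hk.neg_pow, neg_mul] at h
  rw [integral_neg] at h
  linarith

lemma integral_gauss2 : ∫ x : ℝ, x ^ 2 * Real.exp (-x ^ 2 / 2) = Real.sqrt (2 * Real.pi) := by
  have hd : ∀ x : ℝ, HasDerivAt (fun x : ℝ => -x * Real.exp (-x ^ 2 / 2))
      (x ^ 2 * Real.exp (-x ^ 2 / 2) - Real.exp (-x ^ 2 / 2)) x := by
    intro x
    have h1 : HasDerivAt (fun x : ℝ => -x ^ 2 / 2) (-x) x := by
      have h2 := ((hasDerivAt_pow 2 x).neg).div_const 2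
      refine h2.congr_deriv ?_
      simp; ring
    have h3 := h1.exp
    have h4 : HasDerivAt (fun x : ℝ => -x) (-1) x := (hasDerivAt_id x).neg
    have h5 := h4.mul h3
    refine h5.congr_deriv ?_
    ring
  have hint0 : Integrable (fun x : ℝ => Real.exp (-x ^ 2 / 2)) := by
    simpa using integrable_pow_mul_gauss 0
  have hint : Integrable
      (fun x : ℝ => x ^ 2 * Real.exp (-x ^ 2 / 2) - Real.exp (-x ^ 2 / 2)) :=
    (integrable_pow_mul_gauss 2).sub hint0
  have hF : Integrable (fun x : ℝ => -x * Real.exp (-x ^ 2 / 2)) := by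
    have he : (fun x : ℝ => -x * Real.exp (-x ^ 2 / 2))
        = fun x : ℝ => -(x ^ 1 * Real.exp (-x ^ 2 / 2)) := by
      funext x; ring
    rw [he]; exact (integrable_pow_mul_gauss 1).neg
  have h0 := integral_eq_zero_of_hasDerivAt_of_integrable hd hint hF
  rw [integral_sub (integrable_pow_mul_gauss 2) hint0, sub_eq_zero] at h0
  rw [h0, integral_gauss0]

noncomputable def g1 (x : ℝ) : ℝ := (2 * Real.pi) ^ (-(1:ℝ) / 2) * Real.exp (-x ^ 2 / 2)

noncomputable def m (k : ℕ) : ℝ := ∫ x : ℝ, x ^ k * g1 x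

lemma integrable_pow_mul_g1 (k : ℕ) : Integrable (fun x : ℝ => x ^ k * g1 x) := by
  have h := (integrable_pow_mul_gauss k).const_mul ((2 * Real.pi) ^ (-(1:ℝ) / 2))
  have he : (fun x : ℝ => (2 * Real.pi) ^ (-(1:ℝ) / 2) * (x ^ k * Real.exp (-x ^ 2 / 2)))
      = fun x : ℝ => x ^ k * g1 x := by
    funext x; rw [g1]; ring
  rwa [he] at h

lemma m_eq (k : ℕ) :
    m k = (2 * Real.pi) ^ (-(1:ℝ) / 2) * ∫ x : ℝ, x ^ k * Real.exp (-x ^ 2 / 2) := by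
  rw [m, ← integral_const_mul]
  congr 1; funext x; rw [g1]; ring

lemma c_mul_sqrt : (2 * Real.pi) ^ (-(1:ℝ) / 2) * Real.sqrt (2 * Real.pi) = 1 := by
  rw [Real.sqrt_eq_rpow, ← Real.rpow_add (by positivity)]
  norm_num

lemma m_zero : m 0 = 1 := by
  have h := m_eq 0
  simp only [pow_zero, one_mul] at h
  rw [h, integral_gauss0, c_mul_sqrt]

lemma m_one : m 1 = 0 := by
  rw [m_eq 1, integral_gauss_odd 1 odd_one, mul_zero]

lemma m_two : m 2 = 1 := by
  rw [m_eq 2, integral_gauss2, c_mul_sqrt]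

lemma m_three : m 3 = 0 := by
  rw [m_eq 3, integral_gauss_odd 3 ⟨1, by norm_num⟩, mul_zero]

lemma prod_ite_eval {n : ℕ} (c : ℝ) (i : Fin n) (α : Fin n → ℕ) :
    ∏ j, (if j = i then c else 0) ^ α j
      = if ∀ j, j ≠ i → α j = 0 then c ^ α i else 0 := by
  by_cases h : ∀ j, j ≠ i → α j = 0
  · rw [if_pos h, Finset.prod_eq_single i
      (fun j _ hj => by rw [if_neg hj, h j hj, pow_zero]) (by simp)]
    simp
  · rw [if_neg h]
    push_neg at h
    obtain ⟨j, hj, hja⟩ := h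
    exact Finset.prod_eq_zero (Finset.mem_univ j) (by rw [if_neg hj, zero_pow hja])

lemma key {n : ℕ} (hn : 1 ≤ n) (α : Fin n → ℕ) (hα : ∑ i, α i ≤ 3) :
    ∏ i, m (α i) = (1 / (2 * (n:ℝ))) * ∑ i : Fin n,
      ((∏ j, (if j = i then Real.sqrt n else 0) ^ α j)
        + (∏ j, (if j = i then -Real.sqrt n else 0) ^ α j)) := by
  have hn0 : (n:ℝ) ≠ 0 := by positivity
  simp_rw [prod_ite_eval]
  by_cases h0 : ∀ i, α i = 0
  · have hL : ∏ i, m (α i) = 1 := by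
      rw [Finset.prod_congr rfl fun i _ => by rw [h0 i, m_zero]]; simp
    have hR : ∀ i : Fin n,
        ((if ∀ j, j ≠ i → α j = 0 then Real.sqrt n ^ α i else 0)
          + (if ∀ j, j ≠ i → α j = 0 then (-Real.sqrt n) ^ α i else 0)) = 2 := by
      intro i
      rw [if_pos (fun j _ => h0 j), if_pos (fun j _ => h0 j), h0 i, pow_zero, pow_zero]
      norm_num
    rw [hL, Finset.sum_congr rfl fun i _ => hR i, Finset.sum_const, Finset.card_univ,
      Fintype.card_fin, nsmul_eq_mul]
    field_simp
  · push_neg at h0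
    obtain ⟨i₀, hi₀⟩ := h0
    by_cases h1 : ∀ j, j ≠ i₀ → α j = 0
    · -- single active index i₀
      have hk3 : α i₀ ≤ 3 := le_trans (Finset.single_le_sum
        (fun i _ => Nat.zero_le (α i)) (Finset.mem_univ i₀)) hα
      have hk1 : 1 ≤ α i₀ := Nat.one_le_iff_ne_zero.mpr hi₀
      have hL : ∏ i, m (α i) = m (α i₀) :=
        Finset.prod_eq_single i₀ (fun j _ hj => by rw [h1 j hj, m_zero]) (by simp)
      have hR : ∀ i ∈ Finset.univ, i ≠ i₀ →
          ((if ∀ j, j ≠ i → α j = 0 then Real.sqrt n ^ α i else 0)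
            + (if ∀ j, j ≠ i → α j = 0 then (-Real.sqrt n) ^ α i else 0)) = 0 := by
        intro i _ hi
        have hc : ¬ ∀ j, j ≠ i → α j = 0 := fun hc => hi₀ (hc i₀ (Ne.symm hi))
        rw [if_neg hc, if_neg hc, add_zero]
      rw [hL, Finset.sum_eq_single_of_mem i₀ (Finset.mem_univ i₀) hR,
        if_pos h1, if_pos h1]
      have hsq : Real.sqrt n ^ 2 = (n:ℝ) := Real.sq_sqrt (Nat.cast_nonneg n)
      interval_cases h : (α i₀)
      · rw [m_one, pow_one, pow_one]; ring
      · rw [m_two, neg_sq, hsq]; field_simp; ring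
      · rw [m_three]
        have h3 : (-Real.sqrt n) ^ 3 = -(Real.sqrt n ^ 3) :=
          Odd.neg_pow ⟨1, by norm_num⟩ _
        rw [h3]; ring
    · -- at least two active indices
      push_neg at h1
      obtain ⟨j₀, hj₀ne, hj₀⟩ := h1
      have hpair : α i₀ + α j₀ ≤ 3 := by
        have hsub : ({i₀, j₀} : Finset (Fin n)) ⊆ Finset.univ := Finset.subset_univ _
        have := Finset.sum_le_sum_of_subset hsub (f := α)
        rw [Finset.sum_pair (Ne.symm hj₀ne)] at this
        exact le_trans this hα
      have h1i : 1 ≤ α i₀ := Nat.one_le_iff_ne_zero.mpr hi₀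
      have h1j : 1 ≤ α j₀ := Nat.one_le_iff_ne_zero.mpr hj₀
      have hone : α i₀ = 1 ∨ α j₀ = 1 := by omega
      have hL : ∏ i, m (α i) = 0 := by
        rcases hone with h | h
        · exact Finset.prod_eq_zero (Finset.mem_univ i₀) (by rw [h, m_one])
        · exact Finset.prod_eq_zero (Finset.mem_univ j₀) (by rw [h, m_one])
      have hR : ∀ i : Fin n,
          ((if ∀ j, j ≠ i → α j = 0 then Real.sqrt n ^ α i else 0)
            + (if ∀ j, j ≠ i → α j = 0 then (-Real.sqrt n) ^ α i else 0)) = 0 := by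
        intro i
        have hc : ¬ ∀ j, j ≠ i → α j = 0 := by
          intro hc
          by_cases hii : i = i₀
          · exact hj₀ (hc j₀ (hii ▸ hj₀ne))
          · exact hi₀ (hc i₀ fun he => hii he.symm)
        rw [if_neg hc, if_neg hc, add_zero]
      rw [hL, Finset.sum_congr rfl fun i _ => hR i, Finset.sum_const]
      simp

lemma prod_g1 {n : ℕ} (y : Fin n → ℝ) :
    ∏ i, g1 (y i) = (2 * Real.pi) ^ (-(n:ℝ)/2) * Real.exp (-(∑ i, y i ^ 2)/2) := by
  unfold g1
  rw [Finset.prod_mul_distrib, Finset.prod_const, ← Real.exp_sum, Finset.card_univ,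
    Fintype.card_fin]
  congr 1
  · rw [← Real.rpow_natCast ((2*Real.pi) ^ (-(1:ℝ)/2)) n,
      ← Real.rpow_mul (by positivity)]
    congr 1; ring
  · congr 1
    rw [← Finset.sum_div, ← Finset.sum_neg_distrib]

end CubAux


open CubAux in
/-- 3rd-degree exactness of the symmetric `2n`-point cubature rule underlying CNF-I / CKF:
for any polynomial `φ : ℝⁿ → ℝ` of total degree at most 3, the equal-weight rule with nodes
`±√n eᵢ` and weights `1/(2n)` exactly integrates `φ` against the standard Gaussian. -/
theorem third_degree_cubature_exact (n : ℕ) (hn : 1 ≤ n)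
    (φ : MvPolynomial (Fin n) ℝ) (hφ : φ.totalDegree ≤ 3) :
    ∫ x : EuclideanSpace ℝ (Fin n),
        MvPolynomial.eval (fun i => x i) φ *
          ((2 * Real.pi) ^ (-(n : ℝ) / 2) * Real.exp (-‖x‖ ^ 2 / 2))
      = (1 / (2 * (n : ℝ))) * ∑ i : Fin n,
          (MvPolynomial.eval (fun j => if j = i then Real.sqrt n else 0) φ
            + MvPolynomial.eval (fun j => if j = i then -Real.sqrt n else 0) φ) := by
  classical
  -- Step 1: transfer to the product space
  have hstep1 :
      (∫ x : EuclideanSpace ℝ (Fin n),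
        MvPolynomial.eval (fun i => x i) φ *
          ((2 * Real.pi) ^ (-(n : ℝ) / 2) * Real.exp (-‖x‖ ^ 2 / 2)))
      = ∫ y : Fin n → ℝ,
          MvPolynomial.eval y φ *
            ((2 * Real.pi) ^ (-(n : ℝ) / 2) * Real.exp (-(∑ i, y i ^ 2) / 2)) := by
    rw [← (EuclideanSpace.volume_preserving_symm_measurableEquiv_toLp (Fin n)).integral_comp']
    refine integral_congr_ae (Filter.Eventually.of_forall fun x => ?_)
    have hnorm : ‖x‖ ^ 2 = ∑ i, x i ^ 2 := by
      rw [EuclideanSpace.norm_eq, Real.sq_sqrt (Finset.sum_nonneg fun i _ => sq_nonneg _)]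
      simp [sq_abs]
    dsimp only
    rw [hnorm]
    rfl
  -- Step 2: evaluate the integral monomial-wise
  have hstep2 :
      (∫ y : Fin n → ℝ,
          MvPolynomial.eval y φ *
            ((2 * Real.pi) ^ (-(n : ℝ) / 2) * Real.exp (-(∑ i, y i ^ 2) / 2)))
      = ∑ α ∈ φ.support, MvPolynomial.coeff α φ * ∏ i, m (α i) := by
    have hpt : ∀ y : Fin n → ℝ,
        MvPolynomial.eval y φ *
            ((2 * Real.pi) ^ (-(n : ℝ) / 2) * Real.exp (-(∑ i, y i ^ 2) / 2))
        = ∑ α ∈ φ.support, MvPolynomial.coeff α φ * ∏ i, (y i ^ α i * g1 (y i)) := by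
      intro y
      rw [MvPolynomial.eval_eq', Finset.sum_mul]
      refine Finset.sum_congr rfl fun α _ => ?_
      rw [← prod_g1 y, Finset.prod_mul_distrib]
      ring
    simp_rw [hpt]
    rw [integral_finset_sum _ (fun α _ =>
      ((Integrable.fintype_prod (f := fun i t => t ^ α i * g1 t)
        fun i => integrable_pow_mul_g1 (α i)).const_mul _))]
    refine Finset.sum_congr rfl fun α _ => ?_
    rw [integral_const_mul, integral_fintype_prod_volume_eq_prod (fun i t => t ^ α i * g1 t)]
    rfl
  -- Step 3: expand the right-hand side monomial-wise
  have hstep3 :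
      (1 / (2 * (n : ℝ))) * ∑ i : Fin n,
          (MvPolynomial.eval (fun j => if j = i then Real.sqrt n else 0) φ
            + MvPolynomial.eval (fun j => if j = i then -Real.sqrt n else 0) φ)
      = ∑ α ∈ φ.support, MvPolynomial.coeff α φ *
          ((1 / (2 * (n : ℝ))) * ∑ i : Fin n,
            ((∏ j, (if j = i then Real.sqrt n else 0) ^ α j)
              + (∏ j, (if j = i then -Real.sqrt n else 0) ^ α j))) := by
    simp_rw [MvPolynomial.eval_eq', ← Finset.sum_add_distrib, Finset.mul_sum]
    rw [Finset.sum_comm]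
    refine Finset.sum_congr rfl fun α _ => ?_
    refine Finset.sum_congr rfl fun i _ => ?_
    ring
  rw [hstep1, hstep2, hstep3]
  refine Finset.sum_congr rfl fun α hα => ?_
  congr 1
  have hsum : ∑ i, α i ≤ 3 := by
    have h := MvPolynomial.le_totalDegree hα
    have h2 : (α.sum fun _ e => e) = ∑ i, α i :=
      Finsupp.sum_fintype _ _ (fun _ => rfl)
    rw [h2] at h
    exact le_trans h hφ
  exact key hn (fun i => α i) hsum
end
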